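/- For any sets X and Y of countable limit ordinals, the linear orders L_X and L_Y are order-isomorphic if and only if X = Y. -/

import Mathlib

open Ordinal Cardinal

/-- The first uncountable ordinal `ω₁`. -/
noncomputable def omega1' : Ordinal := (Cardinal.aleph 1).ord

/-- The underlying set of the linear order `L_X`:
`{(α, m) ∈ ω₁ × ω : α ∉ X → m = 0}`. -/
def LX (X : Set Ordinal) : Type 1 :=
  {p : {o : Ordinal // o < omega1'} × ℕ // p.1.1 ∉ X → p.2 = 0}

/-- The order on `L_X`: `(α,m) ≺ (β,n)` iff `α < β`, or `α = β ∧ m = 0 < n`,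
or `α = β ∧ m > n > 0`. -/
def LXlt (X : Set Ordinal) : LX X → LX X → Prop := fun p q =>
  p.1.1.1 < q.1.1.1 ∨
  (p.1.1 = q.1.1 ∧ p.1.2 = 0 ∧ 0 < q.1.2) ∨
  (p.1.1 = q.1.1 ∧ q.1.2 < p.1.2 ∧ 0 < q.1.2)

namespace LXaux

variable {X Y : Set Ordinal}

/-- ordinal coordinate -/
def bo (x : LX X) : Ordinal := x.1.1.1
/-- natural coordinate -/
def nn (x : LX X) : ℕ := x.1.2

lemma bo_lt (x : LX X) : bo x < omega1' := x.1.1.2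

lemma mem_of_nn {x : LX X} (h : nn x ≠ 0) : bo x ∈ X := by
  by_contra hc; exact h (x.2 hc)

lemma lt_iff {x y : LX X} : LXlt X x y ↔ (bo x < bo y ∨
    (bo x = bo y ∧ ((nn x = 0 ∧ 0 < nn y) ∨ (nn y < nn x ∧ 0 < nn y)))) := by
  unfold LXlt
  constructor
  · rintro (h | ⟨h, h2⟩ | ⟨h, h2⟩)
    · exact Or.inl h
    · exact Or.inr ⟨congrArg Subtype.val h, Or.inl h2⟩
    · exact Or.inr ⟨congrArg Subtype.val h, Or.inr h2⟩
  · rintro (h | ⟨h, (h2 | h2)⟩)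
    · exact Or.inl h
    · exact Or.inr (Or.inl ⟨Subtype.ext h, h2⟩)
    · exact Or.inr (Or.inr ⟨Subtype.ext h, h2⟩)

lemma ltb {x y : LX X} (h : bo x < bo y) : LXlt X x y := lt_iff.2 (Or.inl h)

lemma lt2 {x y : LX X} (h : bo x = bo y) (h1 : nn x = 0) (h2 : 0 < nn y) : LXlt X x y :=
  lt_iff.2 (Or.inr ⟨h, Or.inl ⟨h1, h2⟩⟩)

lemma lt3 {x y : LX X} (h : bo x = bo y) (h1 : nn y < nn x) (h2 : 0 < nn y) : LXlt X x y :=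
  lt_iff.2 (Or.inr ⟨h, Or.inr ⟨h1, h2⟩⟩)

lemma bo_le {x y : LX X} (h : LXlt X x y) : bo x ≤ bo y := by
  rcases lt_iff.1 h with h | ⟨h, _⟩
  · exact h.le
  · exact h.le

lemma ext' {x y : LX X} (h : bo x = bo y) (h2 : nn x = nn y) : x = y := by
  apply Subtype.ext
  exact Prod.ext (Subtype.ext h) h2

/-- the point `(δ, 0)` -/
def pt (X : Set Ordinal) (δ : Ordinal) (h : δ < omega1') : LX X :=
  ⟨⟨⟨δ, h⟩, 0⟩, fun _ => rfl⟩

@[simp] lemma bo_pt {δ h} : bo (pt X δ h) = δ := rfl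
@[simp] lemma nn_pt {δ h} : nn (pt X δ h) = 0 := rfl

/-- the point `(δ, n)` for `δ ∈ X` -/
def blk (δ : Ordinal) (h : δ < omega1') (hδ : δ ∈ X) (n : ℕ) : LX X :=
  ⟨⟨⟨δ, h⟩, n⟩, fun hc => absurd hδ hc⟩

@[simp] lemma bo_blk {δ h hδ n} : bo (blk (X := X) δ h hδ n) = δ := rfl
@[simp] lemma nn_blk {δ h hδ n} : nn (blk (X := X) δ h hδ n) = n := rfl

/-- projection onto the block index: the largest multiple of `ω` below -/
noncomputable def proj (x : LX X) : Ordinal := ω * (bo x / ω)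

lemma proj_le (x : LX X) : proj x ≤ bo x := mul_div_le _ _

lemma proj_lt_omega1 (x : LX X) : proj x < omega1' := (proj_le x).trans_lt (bo_lt x)

lemma lt_proj_add (x : LX X) : bo x < proj x + ω := lt_mul_div_add _ omega0_ne_zero

lemma dvd_proj (x : LX X) : ω ∣ proj x := ⟨_, rfl⟩

lemma proj_mono {x y : LX X} (h : LXlt X x y) : proj x ≤ proj y :=
  mul_le_mul_right (div_le_left (bo_le h) ω) ω

lemma proj_pt {δ : Ordinal} (hd : ω ∣ δ) (h : δ < omega1') : proj (pt X δ h) = δ := by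
  obtain ⟨c, rfl⟩ := hd
  simp [proj, Ordinal.mul_div_cancel _ omega0_ne_zero]

lemma proj_of_limit {x : LX X} (hl : Order.IsSuccLimit (bo x)) : proj x = bo x := by
  obtain ⟨-, c, hc⟩ := isSuccLimit_iff_omega0_dvd.1 hl
  unfold proj
  rw [hc, Ordinal.mul_div_cancel _ omega0_ne_zero]

lemma mult_add_le {a b : Ordinal} (ha : ω ∣ a) (hb : ω ∣ b) (h : a < b) : a + ω ≤ b := by
  obtain ⟨c, rfl⟩ := ha
  obtain ⟨d, rfl⟩ := hb
  rw [← mul_succ]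
  exact mul_le_mul_right (Order.succ_le_iff.2 ((mul_lt_mul_iff_of_pos_left omega0_pos).1 h)) ω

lemma mult_limit {a : Ordinal} (ha : ω ∣ a) (h0 : a ≠ 0) : Order.IsSuccLimit a :=
  isSuccLimit_iff_omega0_dvd.2 ⟨h0, ha⟩

lemma omega1_isLimit : Order.IsSuccLimit (omega1') := isSuccLimit_ord (aleph0_le_aleph 1)

lemma succ_lt_omega1 {δ : Ordinal} (h : δ < omega1') : δ + 1 < omega1' := by
  rw [add_one_eq_succ]; exact omega1_isLimit.succ_lt h

lemma lt_add_one_self (δ : Ordinal) : δ < δ + 1 := by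
  rw [add_one_eq_succ]; exact Order.lt_succ δ

/-- has an immediate predecessor -/
def HasIP (z : LX X) : Prop :=
  ∃ w, LXlt X w z ∧ ∀ v, ¬(LXlt X w v ∧ LXlt X v z)

/-- has an immediate successor -/
def HasIS (z : LX X) : Prop :=
  ∃ w, LXlt X z w ∧ ∀ v, ¬(LXlt X z v ∧ LXlt X v w)

/-- one-sided "all points in `(x,y]` have immediate predecessors" relation -/
def ee (x y : LX X) : Prop :=
  x = y ∨ (LXlt X x y ∧ ∀ z, LXlt X x z → (LXlt X z y ∨ z = y) → HasIP z)

/- points `(δ,0)` with `δ` a limit have no immediate predecessor -/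
lemma noIP {x : LX X} (hl : Order.IsSuccLimit (bo x)) (hn : nn x = 0) : ¬HasIP x := by
  rintro ⟨w, h1, h2⟩
  have hw : bo w < bo x := by
    rcases lt_iff.1 h1 with h | ⟨h, (⟨_, h3⟩ | ⟨_, h3⟩)⟩
    · exact h
    · simp [hn] at h3
    · simp [hn] at h3
  have hsw : bo w + 1 < bo x := by
    rw [add_one_eq_succ]; exact hl.succ_lt hw
  exact h2 (pt X (bo w + 1) (hsw.trans (bo_lt x)))
    ⟨ltb (by simpa using lt_add_one_self (bo w)), ltb (by simpa using hsw)⟩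

/- points `(δ,0)` with `δ ∈ X` have no immediate successor -/
lemma noIS_mem {δ : Ordinal} (h : δ < omega1') (hδ : δ ∈ X) : ¬HasIS (pt X δ h) := by
  rintro ⟨w, h1, h2⟩
  rcases lt_iff.1 h1 with hb | ⟨hb, (⟨_, h3⟩ | ⟨h3, _⟩)⟩
  · exact h2 (blk δ h hδ 1) ⟨lt2 rfl rfl one_pos, ltb (by simpa using hb)⟩
  · exact h2 (blk δ h hδ (nn w + 1)) ⟨lt2 rfl rfl (Nat.succ_pos _),
      lt3 (by simpa using hb) (by simp) h3⟩
  · simp [nn_pt] at h3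

/- points `(β,0)` with `β ∉ X` have an immediate successor, namely `(β+1,0)` -/
lemma hasIS_not_mem {x : LX X} (hβ : bo x ∉ X) (hn : nn x = 0) : HasIS x := by
  refine ⟨pt X (bo x + 1) (succ_lt_omega1 (bo_lt x)), ltb (by simpa using lt_add_one_self _), ?_⟩
  rintro v ⟨h1, h2⟩
  have hv1 : bo x < bo v := by
    rcases lt_iff.1 h1 with h | ⟨h, (⟨_, h3⟩ | ⟨h3, h4⟩)⟩
    · exact h
    · exact absurd (mem_of_nn h3.ne') (h ▸ hβ)
    · omega
  have hv2 : bo v < bo x + 1 := by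
    rcases lt_iff.1 h2 with h | ⟨h, (⟨_, h3⟩ | ⟨_, h3⟩)⟩
    · exact h
    · simp [nn_pt] at h3
    · simp [nn_pt] at h3
  rw [add_one_eq_succ, Order.lt_succ_iff] at hv2
  exact hv1.not_ge hv2

/- block points `(δ, n+1)` have immediate predecessor `(δ, n+2)` -/
lemma hasIP_blk {x : LX X} (hn : nn x ≠ 0) : HasIP x := by
  have hδ : bo x ∈ X := mem_of_nn hn
  refine ⟨blk (bo x) (bo_lt x) hδ (nn x + 1), lt3 rfl (by simp) (Nat.pos_of_ne_zero hn), ?_⟩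
  rintro v ⟨h1, h2⟩
  have hb1 : bo x ≤ bo v := by simpa using bo_le h1
  have hb2 : bo v ≤ bo x := bo_le h2
  have hbv : bo v = bo x := le_antisymm hb2 hb1
  rcases lt_iff.1 h1 with h | ⟨h, (⟨h3, _⟩ | ⟨h3, h4⟩)⟩
  · rw [bo_blk, hbv] at h; exact lt_irrefl _ h
  · rw [nn_blk] at h3; omega
  · -- nn v < nn x + 1 and 0 < nn v
    rw [nn_blk] at h3
    rcases lt_iff.1 h2 with h' | ⟨h', (⟨h5, h6⟩ | ⟨h5, h6⟩)⟩
    · rw [hbv] at h'; exact lt_irrefl _ h'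
    · omega
    · omega

/- successor-indexed points `(γ+1, 0)` have an immediate predecessor -/
lemma hasIP_succ {x : LX X} {γ : Ordinal} (hb : bo x = γ + 1) (hn : nn x = 0) : HasIP x := by
  have hγ : γ < omega1' := (lt_add_one_self γ).trans (hb ▸ bo_lt x)
  by_cases hγX : γ ∈ X
  · refine ⟨blk γ hγ hγX 1, ltb (by simpa [hb] using lt_add_one_self γ), ?_⟩
    rintro v ⟨h1, h2⟩
    have hv1 : γ < bo v := by
      rcases lt_iff.1 h1 with h | ⟨h, (⟨h3, _⟩ | ⟨h3, h4⟩)⟩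
      · simpa using h
      · simp at h3
      · simp [nn_blk] at h3 h4; omega
    have hv2 : bo v < γ + 1 := by
      rcases lt_iff.1 h2 with h | ⟨h, (⟨_, h3⟩ | ⟨_, h3⟩)⟩
      · simpa [hb] using h
      · simp [hn] at h3
      · simp [hn] at h3
    rw [add_one_eq_succ, Order.lt_succ_iff] at hv2
    exact hv1.not_ge hv2
  · refine ⟨pt X γ hγ, ltb (by simpa [hb] using lt_add_one_self γ), ?_⟩
    rintro v ⟨h1, h2⟩
    have hv1 : γ < bo v := by
      rcases lt_iff.1 h1 with h | ⟨h, (⟨_, h3⟩ | ⟨h3, h4⟩)⟩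
      · simpa using h
      · exfalso
        have h' : γ = bo v := by simpa using h
        exact hγX (by rw [h']; exact mem_of_nn h3.ne')
      · simp [nn_pt] at h3
    have hv2 : bo v < γ + 1 := by
      rcases lt_iff.1 h2 with h | ⟨h, (⟨_, h3⟩ | ⟨_, h3⟩)⟩
      · simpa [hb] using h
      · simp [hn] at h3
      · simp [hn] at h3
    rw [add_one_eq_succ, Order.lt_succ_iff] at hv2
    exact hv1.not_ge hv2

/-- `ee` implies equal projections -/
lemma proj_eq_of_ee {x y : LX X} (h : ee x y) : proj x = proj y := by
  rcases h with rfl | ⟨hlt, hall⟩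
  · rfl
  have hle : proj x ≤ proj y := proj_mono hlt
  rcases eq_or_lt_of_le hle with heq | hlt'
  · exact heq
  exfalso
  -- z = (proj y, 0) lies in (x, y] and has no immediate predecessor
  set δ := proj y with hδ
  have hδ1 : δ < omega1' := proj_lt_omega1 y
  have hxz : bo x < δ := (lt_proj_add x).trans_le (mult_add_le (dvd_proj x) (dvd_proj y) hlt')
  have hz : LXlt X (pt X δ hδ1) y ∨ pt X δ hδ1 = y := by
    rcases eq_or_lt_of_le (proj_le y) with h | h
    · rcases Nat.eq_zero_or_pos (nn y) with h0 | h0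
      · exact Or.inr (ext' (by simpa using h) (by simpa using h0.symm))
      · exact Or.inl (lt2 (by simpa using h) rfl h0)
    · exact Or.inl (ltb (by simpa using h))
  have hip := hall _ (ltb (by simpa using hxz)) hz
  have hlim : Order.IsSuccLimit δ := mult_limit (dvd_proj y)
    (by rintro h0; rw [h0] at hxz; exact (not_lt_zero hxz))
  exact noIP (by simpa using hlim) (by simp) hip

/-- equal projections plus `≤` implies `ee` -/
lemma ee_of_proj_eq {x y : LX X} (hle : LXlt X x y ∨ x = y) (hp : proj x = proj y) :
    ee x y := by
  rcases hle with hlt | rfl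
  · refine Or.inr ⟨hlt, ?_⟩
    intro z hxz hzy
    have hpz : proj z = proj x := by
      have h1 : proj x ≤ proj z := proj_mono hxz
      have h2 : proj z ≤ proj y := by
        rcases hzy with h | rfl
        · exact proj_mono h
        · exact le_rfl
      exact le_antisymm (hp ▸ h2) h1
    rcases Nat.eq_zero_or_pos (nn z) with h0 | h0
    · -- nn z = 0; then bo z is a successor
      have hzx : proj x ≤ bo z := hpz ▸ proj_le z
      have hne : bo z ≠ proj x := by
        intro he
        -- then z = (proj x, 0) ≤ x, contradicting x < z
        have : bo x < proj x := by
          rcases lt_iff.1 hxz with h | ⟨h, (⟨_, h3⟩ | ⟨_, h3⟩)⟩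
          · rwa [he] at h
          · simp [h0] at h3
          · simp [h0] at h3
        exact this.not_ge (proj_le x)
      have hzgt : proj x < bo z := lt_of_le_of_ne hzx (Ne.symm hne)
      have hnlim : ¬ Order.IsSuccLimit (bo z) := by
        intro hl
        exact hne ((proj_of_limit hl).symm.trans hpz)
      rcases Ordinal.zero_or_succ_or_isSuccLimit (bo z) with h | ⟨γ, hγ⟩ | h
      · rw [h] at hzgt; exact absurd hzgt not_lt_zero
      · exact hasIP_succ (by rw [← hγ, add_one_eq_succ]) h0
      · exact absurd h hnlim
    · exact hasIP_blk h0.ne'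
  · exact Or.inl rfl

lemma ee_pt_proj (x : LX X) : ee (pt X (proj x) (proj_lt_omega1 x)) x := by
  apply ee_of_proj_eq
  · rcases eq_or_lt_of_le (proj_le x) with h | h
    · rcases Nat.eq_zero_or_pos (nn x) with h0 | h0
      · exact Or.inr (ext' (by simpa using h) (by simpa using h0.symm))
      · exact Or.inl (lt2 (by simpa using h) rfl h0)
    · exact Or.inl (ltb (by simpa using h))
  · rw [proj_pt (dvd_proj x) (proj_lt_omega1 x)]

/-! ### transfer along an isomorphism -/

variable (f : LXlt X ≃r LXlt Y)

lemma map_lt {x y : LX X} (h : LXlt X x y) : LXlt Y (f x) (f y) := f.map_rel_iff.2 h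

lemma hasIP_map {z : LX X} (h : HasIP (f z)) : HasIP z := by
  obtain ⟨w, h1, h2⟩ := h
  refine ⟨f.symm w, ?_, ?_⟩
  · have := f.map_rel_iff (a := f.symm w) (b := z)
    rw [f.apply_symm_apply] at this
    exact this.1 h1
  · intro v ⟨hv1, hv2⟩
    refine h2 (f v) ⟨?_, map_lt f hv2⟩
    have := f.map_rel_iff (a := f.symm w) (b := v)
    rw [f.apply_symm_apply] at this
    exact this.2 hv1

lemma hasIS_map {z : LX X} (h : HasIS (f z)) : HasIS z := by
  obtain ⟨w, h1, h2⟩ := h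
  refine ⟨f.symm w, ?_, ?_⟩
  · have := f.map_rel_iff (a := z) (b := f.symm w)
    rw [f.apply_symm_apply] at this
    exact this.1 h1
  · intro v ⟨hv1, hv2⟩
    refine h2 (f v) ⟨map_lt f hv1, ?_⟩
    have := f.map_rel_iff (a := v) (b := f.symm w)
    rw [f.apply_symm_apply] at this
    exact this.2 hv2

lemma ee_map {x y : LX X} (h : ee x y) : ee (f x) (f y) := by
  rcases h with rfl | ⟨h1, h2⟩
  · exact Or.inl rfl
  refine Or.inr ⟨map_lt f h1, ?_⟩
  intro z hz1 hz2
  have hz1' : LXlt X x (f.symm z) := by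
    have := f.map_rel_iff (a := x) (b := f.symm z)
    rw [f.apply_symm_apply] at this
    exact this.1 hz1
  have hz2' : LXlt X (f.symm z) y ∨ f.symm z = y := by
    rcases hz2 with h | h
    · left
      have := f.map_rel_iff (a := f.symm z) (b := y)
      rw [f.apply_symm_apply] at this
      exact this.1 h
    · right
      rw [h, f.symm_apply_apply]
  have := h2 _ hz1' hz2'
  have hz : z = f (f.symm z) := (f.apply_symm_apply z).symm
  rw [hz]
  -- need: HasIP (f.symm z) → HasIP (f (f.symm z)); use hasIP_map with f.symm
  exact hasIP_map f.symm (by rwa [f.symm_apply_apply])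

/-- the induced map on multiples of `ω` -/
noncomputable def Fm (δ : Ordinal) (h : δ < omega1') : Ordinal :=
  proj (f (pt X δ h))

lemma Fm_lt_omega1 {δ h} : Fm f δ h < omega1' := proj_lt_omega1 _

lemma Fm_congr {δ δ' : Ordinal} {h : δ < omega1'} {h' : δ' < omega1'} (e : δ = δ') :
    Fm f δ h = Fm f δ' h' := by subst e; rfl

lemma Fm_dvd {δ h} : ω ∣ Fm f δ h := dvd_proj _

/-- commutation: `proj (f x) = Fm (proj x)` -/
lemma proj_map (x : LX X) : proj (f x) = Fm f (proj x) (proj_lt_omega1 x) := by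
  have h1 : ee (pt X (proj x) (proj_lt_omega1 x)) x := ee_pt_proj x
  have h2 := ee_map f h1
  exact (proj_eq_of_ee h2).symm

lemma Fm_strictMono {δ δ' : Ordinal} (hδ : ω ∣ δ) (hδ' : ω ∣ δ')
    (h1 : δ < omega1') (h2 : δ' < omega1') (hlt : δ < δ') :
    Fm f δ h1 < Fm f δ' h2 := by
  have hptlt : LXlt X (pt X δ h1) (pt X δ' h2) := ltb (by simpa using hlt)
  have hle : Fm f δ h1 ≤ Fm f δ' h2 := proj_mono (map_lt f hptlt)
  rcases eq_or_lt_of_le hle with heq | h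
  · exfalso
    -- equal projections would give ee between the images, pull back, contradiction
    have hee : ee (f (pt X δ h1)) (f (pt X δ' h2)) :=
      ee_of_proj_eq (Or.inl (map_lt f hptlt)) heq
    have hee' : ee (pt X δ h1) (pt X δ' h2) := by
      have := ee_map f.symm hee
      rwa [f.symm_apply_apply, f.symm_apply_apply] at this
    have := proj_eq_of_ee hee'
    rw [proj_pt hδ h1, proj_pt hδ' h2] at this
    exact hlt.ne this
  · exact h

lemma le_Fm : ∀ (δ : Ordinal) (hd : ω ∣ δ) (h : δ < omega1'), δ ≤ Fm f δ h := by
  intro δ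
  induction δ using Ordinal.induction with
  | h δ IH =>
    intro hd h
    by_contra hc
    push_neg at hc
    have h2 : Fm f δ h < omega1' := Fm_lt_omega1 f
    have h3 := IH _ hc (Fm_dvd f) h2
    have h4 := Fm_strictMono f (Fm_dvd f) hd h2 h hc
    exact (h3.trans_lt h4).ne rfl

lemma Fm_fixed {δ : Ordinal} (hd : ω ∣ δ) (h : δ < omega1') : Fm f δ h = δ := by
  have h1 : δ ≤ Fm f δ h := le_Fm f δ hd h
  have h2 : Fm f δ h ≤ Fm (f.symm) (Fm f δ h) (Fm_lt_omega1 f) :=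
    le_Fm f.symm _ (Fm_dvd f) (Fm_lt_omega1 f)
  have h3 : Fm (f.symm) (Fm f δ h) (Fm_lt_omega1 f) = δ := by
    have hcomm := proj_map f.symm (f (pt X δ h))
    rw [f.symm_apply_apply] at hcomm
    rw [proj_pt hd h] at hcomm
    -- hcomm : δ = Fm f.symm (proj (f (pt X δ h))) _
    have : proj (f (pt X δ h)) = Fm f δ h := rfl
    simp only [this] at hcomm
    exact hcomm.symm
  exact le_antisymm (h2.trans_eq h3) h1

/-- membership transfers along the isomorphism -/
lemma subset_of_iso (f : LXlt X ≃r LXlt Y) (hX : ∀ o ∈ X, o < omega1' ∧ Order.IsSuccLimit o)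
    (hY : ∀ o ∈ Y, o < omega1' ∧ Order.IsSuccLimit o) : X ⊆ Y := by
  intro δ hδ
  obtain ⟨h1, h2⟩ := hX δ hδ
  have hd : ω ∣ δ := (isSuccLimit_iff_omega0_dvd.1 h2).2
  set x := pt X δ h1 with hx
  have hnoIS : ¬HasIS x := noIS_mem h1 hδ
  have hnoIS' : ¬HasIS (f x) := fun h => hnoIS (hasIS_map f h)
  have hproj : proj (f x) = δ := by
    rw [proj_map f x]
    rw [Fm_congr f (show proj x = δ by rw [hx, proj_pt hd h1]) (h' := h1)]
    exact Fm_fixed f hd h1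
  -- analyze the point y := f x in LX Y
  set y := f x with hy
  rcases Nat.eq_zero_or_pos (nn y) with h0 | h0
  · by_cases hmem : bo y ∈ Y
    · have hlim := (hY _ hmem).2
      have hpy : proj y = bo y := proj_of_limit hlim
      rw [hproj] at hpy
      rw [hpy]; exact hmem
    · exact absurd (hasIS_not_mem hmem h0) hnoIS'
  · have hmem : bo y ∈ Y := mem_of_nn h0.ne'
    have hlim := (hY _ hmem).2
    have hpy : proj y = bo y := proj_of_limit hlim
    rw [hproj] at hpy
    rw [hpy]; exact hmem

end LXaux

/-- For sets `X`, `Y` of countable limit ordinals, `L_X ≅ L_Y` iff `X = Y`. -/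
theorem stmt6 (X Y : Set Ordinal)
    (hX : ∀ o ∈ X, o < omega1' ∧ Order.IsSuccLimit o)
    (hY : ∀ o ∈ Y, o < omega1' ∧ Order.IsSuccLimit o) :
    Nonempty (LXlt X ≃r LXlt Y) ↔ X = Y := by
  constructor
  · rintro ⟨f⟩
    exact Set.Subset.antisymm (LXaux.subset_of_iso f hX hY)
      (LXaux.subset_of_iso f.symm hY hX)
  · rintro rfl
    exact ⟨RelIso.refl _⟩
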